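/- Let O_1, …, O_T : [0,1] → ℝ be continuously differentiable functions, let w_1, …, w_T be nonnegative reals with ∑_{t=1}^T w_t > 0, and fix k ∈ ℝ. Assume D = ∑_{t=1}^T w_t ∫_0^1 (k − O_t(τ))² dτ > 0. Then the function u(h) = ∑_{t=1}^T w_t { ½ ∫_0^1 (O_t'(τ) − h(k − O_t(τ)))² dτ − h/2 } on ℝ has a unique global minimizer, namely h* = (∑_{t=1}^T w_t [ ½ + k(O_t(1) − O_t(0)) − ∫_0^1 O_t'(τ) O_t(τ) dτ ]) / D. -/

import Mathlib

/-- Reestimation of the Ornstein–Uhlenbeck concentration parameter with mean `k`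
held fixed: assuming `D = ∑ w t ∫₀¹ (k − O t τ)² dτ > 0`, the function
`u(h) = ∑ w t {½∫₀¹ (O t'(τ) − h(k − O t τ))² dτ − h/2}` has the unique global
minimizer `h* = ∑ w t [½ + k(O t 1 − O t 0) − ∫₀¹ O t' O t] / D`. -/
theorem stmt_10 (T : ℕ) (O : Fin T → ℝ → ℝ) (hO : ∀ t, ContDiff ℝ 1 (O t))
    (w : Fin T → ℝ) (hw : ∀ t, 0 ≤ w t) (hpos : 0 < ∑ t, w t) (k : ℝ)
    (hD : 0 < ∑ t, w t * ∫ τ in (0:ℝ)..1, (k - O t τ) ^ 2) :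
    let u : ℝ → ℝ := fun h => ∑ t, w t *
      ((1 / 2) * (∫ τ in (0:ℝ)..1, (deriv (O t) τ - h * (k - O t τ)) ^ 2) - h / 2)
    let hstar : ℝ :=
      (∑ t, w t * (1 / 2 + k * (O t 1 - O t 0) - ∫ τ in (0:ℝ)..1, deriv (O t) τ * O t τ))
        / (∑ t, w t * ∫ τ in (0:ℝ)..1, (k - O t τ) ^ 2)
    (∀ h, u hstar ≤ u h) ∧ (∀ h, u h = u hstar ↔ h = hstar) := by
  intro u hstar
  have hOc : ∀ t, Continuous (O t) := fun t => (hO t).continuous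
  have hdc : ∀ t, Continuous (deriv (O t)) := fun t => (hO t).continuous_deriv le_rfl
  set a : Fin T → ℝ := fun t => ∫ τ in (0:ℝ)..1, (k - O t τ) ^ 2 with ha
  set b : Fin T → ℝ := fun t => ∫ τ in (0:ℝ)..1, deriv (O t) τ * (k - O t τ) with hb
  set c : Fin T → ℝ := fun t => ∫ τ in (0:ℝ)..1, (deriv (O t) τ) ^ 2 with hc
  set A : ℝ := ∑ t, w t * a t with hA
  set B : ℝ := ∑ t, w t * b t with hB
  set W : ℝ := ∑ t, w t with hW
  set C : ℝ := ∑ t, w t * c t with hC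
  have hAint : ∀ t, IntervalIntegrable (fun τ => (k - O t τ) ^ 2) MeasureTheory.volume 0 1 :=
    fun t => ((continuous_const.sub (hOc t)).pow 2).intervalIntegrable 0 1
  have hBint : ∀ t, IntervalIntegrable (fun τ => deriv (O t) τ * (k - O t τ)) MeasureTheory.volume 0 1 :=
    fun t => ((hdc t).mul (continuous_const.sub (hOc t))).intervalIntegrable 0 1
  have hCint : ∀ t, IntervalIntegrable (fun τ => (deriv (O t) τ) ^ 2) MeasureTheory.volume 0 1 :=
    fun t => ((hdc t).pow 2).intervalIntegrable 0 1
  -- key pointwise expansion of each integral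
  have key : ∀ t (h : ℝ),
      (∫ τ in (0:ℝ)..1, (deriv (O t) τ - h * (k - O t τ)) ^ 2)
        = c t - 2 * h * b t + h ^ 2 * a t := by
    intro t h
    have e : ∀ τ : ℝ, (deriv (O t) τ - h * (k - O t τ)) ^ 2
        = ((deriv (O t) τ) ^ 2 - (2 * h) * (deriv (O t) τ * (k - O t τ)))
          + h ^ 2 * ((k - O t τ) ^ 2) := fun τ => by ring
    calc (∫ τ in (0:ℝ)..1, (deriv (O t) τ - h * (k - O t τ)) ^ 2)
        = ∫ τ in (0:ℝ)..1, (((deriv (O t) τ) ^ 2 - (2 * h) * (deriv (O t) τ * (k - O t τ)))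
          + h ^ 2 * ((k - O t τ) ^ 2)) := by
            exact intervalIntegral.integral_congr (fun τ _ => e τ)
      _ = c t - 2 * h * b t + h ^ 2 * a t := by
          rw [intervalIntegral.integral_add ((hCint t).sub ((hBint t).const_mul _))
              ((hAint t).const_mul _),
            intervalIntegral.integral_sub (hCint t) ((hBint t).const_mul _),
            intervalIntegral.integral_const_mul, intervalIntegral.integral_const_mul]
  -- u is a quadratic
  have hu : ∀ h : ℝ, u h = (h ^ 2 / 2) * A - h * B - (h / 2) * W + (1 / 2) * C := by
    intro h
    have e1 : u h = ∑ t, ((h ^ 2 / 2) * (w t * a t) - h * (w t * b t) - (h / 2) * w t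
        + (1 / 2) * (w t * c t)) :=
      Finset.sum_congr rfl (fun t _ => by rw [key t h]; ring)
    rw [e1, Finset.sum_add_distrib, Finset.sum_sub_distrib, Finset.sum_sub_distrib,
      ← Finset.mul_sum, ← Finset.mul_sum, ← Finset.mul_sum, ← Finset.mul_sum, hA, hB, hW, hC]
  have hApos : 0 < A := hD
  -- numerator of hstar equals B + W/2
  have hnum : (∑ t, w t * (1 / 2 + k * (O t 1 - O t 0)
      - ∫ τ in (0:ℝ)..1, deriv (O t) τ * O t τ)) = B + W / 2 := by
    have hterm : ∀ t : Fin T, 1 / 2 + k * (O t 1 - O t 0)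
        - (∫ τ in (0:ℝ)..1, deriv (O t) τ * O t τ) = b t + 1 / 2 := by
      intro t
      have ftc : (∫ τ in (0:ℝ)..1, deriv (O t) τ) = O t 1 - O t 0 :=
        intervalIntegral.integral_deriv_eq_sub
          (fun x _ => ((hO t).differentiable one_ne_zero) x) ((hdc t).intervalIntegrable 0 1)
      have hbalt : b t = k * (O t 1 - O t 0) - ∫ τ in (0:ℝ)..1, deriv (O t) τ * O t τ := by
        rw [hb]
        have e : ∀ τ : ℝ, deriv (O t) τ * (k - O t τ)
            = k * deriv (O t) τ - deriv (O t) τ * O t τ := fun τ => by ring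
        calc (∫ τ in (0:ℝ)..1, deriv (O t) τ * (k - O t τ))
            = ∫ τ in (0:ℝ)..1, (k * deriv (O t) τ - deriv (O t) τ * O t τ) :=
              intervalIntegral.integral_congr (fun τ _ => e τ)
          _ = k * (∫ τ in (0:ℝ)..1, deriv (O t) τ)
              - ∫ τ in (0:ℝ)..1, deriv (O t) τ * O t τ := by
              rw [intervalIntegral.integral_sub (((hdc t).intervalIntegrable 0 1).const_mul _)
                (show IntervalIntegrable (fun τ => deriv (O t) τ * O t τ) MeasureTheory.volume 0 1 from ((hdc t).mul (hOc t)).intervalIntegrable 0 1),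
                intervalIntegral.integral_const_mul]
          _ = k * (O t 1 - O t 0) - ∫ τ in (0:ℝ)..1, deriv (O t) τ * O t τ := by rw [ftc]
      rw [hbalt]; ring
    calc (∑ t, w t * (1 / 2 + k * (O t 1 - O t 0)
          - ∫ τ in (0:ℝ)..1, deriv (O t) τ * O t τ))
        = ∑ t, (w t * b t + (1 / 2) * w t) := by
          refine Finset.sum_congr rfl (fun t _ => ?_)
          rw [hterm t]; ring
      _ = B + W / 2 := by
          rw [Finset.sum_add_distrib, ← Finset.mul_sum, hB, hW]; ring
  have hstar_eq : hstar = (B + W / 2) / A := by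
    simp only [hstar, hnum, hA, ha]
  have hsA : hstar * A = B + W / 2 := by
    rw [hstar_eq, div_mul_cancel₀ _ (ne_of_gt hApos)]
  have hdiff : ∀ h : ℝ, u h - u hstar = (A / 2) * (h - hstar) ^ 2 := by
    intro h
    rw [hu h, hu hstar]
    linear_combination (h - hstar) * hsA
  constructor
  · intro h
    nlinarith [hdiff h, sq_nonneg (h - hstar), hApos.le]
  · intro h
    constructor
    · intro he
      have h0 : (A / 2) * (h - hstar) ^ 2 = 0 := by rw [← hdiff h, he]; ring
      have : (h - hstar) ^ 2 = 0 := by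
        rcases mul_eq_zero.mp h0 with h1 | h1
        · exact absurd h1 (half_pos hApos).ne'
        · exact h1
      have := pow_eq_zero_iff (n := 2) (by norm_num) |>.mp this
      linarith
    · rintro rfl; rfl
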